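/- The density f(x) = (3/(2√(2π))) exp(-x²/2)(1 - erf(x/√2)²) of the median of three i.i.d. standard normals is not equal to any normal density; in particular its fourth moment differs from 3·(1-√3/π)², so the median is not normally distributed. -/

import Mathlib

open Real MeasureTheory Filter Topology

noncomputable def erf (x : ℝ) : ℝ := 2 / Real.sqrt π * ∫ s in (0:ℝ)..x, Real.exp (-s^2)

noncomputable def f (x : ℝ) : ℝ :=
  (3 / (2 * Real.sqrt (2*π))) * Real.exp (-x^2/2) * (1 - erf (x / Real.sqrt 2)^2)

lemma gauss_cont : Continuous fun s : ℝ => Real.exp (-s^2) := by continuity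

lemma gauss_intble : Integrable (fun s : ℝ => Real.exp (-s^2)) := by
  simpa using integrable_exp_neg_mul_sq (b := 1) one_pos

lemma erf_hasDerivAt (x : ℝ) : HasDerivAt erf (2 / Real.sqrt π * Real.exp (-x^2)) x := by
  have h : HasDerivAt (fun y => ∫ s in (0:ℝ)..y, Real.exp (-s^2)) (Real.exp (-x^2)) x :=
    intervalIntegral.integral_hasDerivAt_right gauss_intble.intervalIntegrable
      (gauss_cont.stronglyMeasurableAtFilter _ _) gauss_cont.continuousAt
  exact h.const_mul (2 / Real.sqrt π)

noncomputable def cc : ℝ := (Real.sqrt (2*π))⁻¹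
noncomputable def pp (x : ℝ) : ℝ := Real.exp (-x^2/2)
noncomputable def EE (x : ℝ) : ℝ := erf (x / Real.sqrt 2)
noncomputable def EE3 (x : ℝ) : ℝ := erf (x * (Real.sqrt 3 / Real.sqrt 2))

noncomputable def H (x : ℝ) : ℝ :=
  (3/2) * ((1 - EE x^2) * (-(x^3+3*x)*cc*pp x + (3/2)*EE x) + EE x^3
    - 4*EE x*(-(x^2/2+2)*cc^2*pp x^2)
    - 4*(-(x/3)*cc^3*pp x^3 + 13*Real.sqrt 3/(36*π) * EE3 x))

lemma sqrt_two_pi : Real.sqrt (2*π) = Real.sqrt 2 * Real.sqrt π :=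
  Real.sqrt_mul (by norm_num) π

lemma pp_hasDerivAt (x : ℝ) : HasDerivAt pp (-x * pp x) x := by
  have h1 : HasDerivAt (fun y : ℝ => -y^2/2) (-x) x := by
    have := ((hasDerivAt_pow 2 x).neg.div_const 2)
    exact this.congr_deriv (by simp; ring)
  have := h1.exp
  unfold pp
  simpa [mul_comm] using this

lemma EE_hasDerivAt (x : ℝ) : HasDerivAt EE (2*cc*pp x) x := by
  have h1 : HasDerivAt (fun y : ℝ => y / Real.sqrt 2) (1 / Real.sqrt 2) x := by
    simpa using (hasDerivAt_id x).div_const (Real.sqrt 2)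
  have h := (erf_hasDerivAt (x / Real.sqrt 2)).comp x h1
  have h2 : Real.sqrt 2 ^ 2 = 2 := Real.sq_sqrt (by norm_num)
  have h2p : (0:ℝ) < Real.sqrt 2 := Real.sqrt_pos.2 (by norm_num)
  have hπsp : (0:ℝ) < Real.sqrt π := Real.sqrt_pos.2 Real.pi_pos
  have harg : -(x / Real.sqrt 2)^2 = -x^2/2 := by
    rw [div_pow, h2]; ring
  rw [harg] at h
  refine h.congr_deriv ?_
  unfold cc pp
  rw [sqrt_two_pi]
  field_simp

lemma EE3_hasDerivAt (x : ℝ) : HasDerivAt EE3 (2*Real.sqrt 3*cc*pp x^3) x := by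
  have h1 : HasDerivAt (fun y : ℝ => y * (Real.sqrt 3 / Real.sqrt 2)) (Real.sqrt 3 / Real.sqrt 2) x := by
    simpa using (hasDerivAt_id x).mul_const (Real.sqrt 3 / Real.sqrt 2)
  have h := (erf_hasDerivAt (x * (Real.sqrt 3 / Real.sqrt 2))).comp x h1
  have h2 : Real.sqrt 2 ^ 2 = 2 := Real.sq_sqrt (by norm_num)
  have h3 : Real.sqrt 3 ^ 2 = 3 := Real.sq_sqrt (by norm_num)
  have h2p : (0:ℝ) < Real.sqrt 2 := Real.sqrt_pos.2 (by norm_num)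
  have h3p : (0:ℝ) < Real.sqrt 3 := Real.sqrt_pos.2 (by norm_num)
  have hπsp : (0:ℝ) < Real.sqrt π := Real.sqrt_pos.2 Real.pi_pos
  have harg : -(x * (Real.sqrt 3 / Real.sqrt 2))^2 = 3 * (-x^2/2) := by
    rw [mul_pow, div_pow, h2, h3]; ring
  rw [harg] at h
  have hexp : Real.exp (3 * (-x^2/2)) = pp x ^ 3 := by
    rw [show (3 : ℝ) * (-x^2/2) = (3:ℕ) * (-x^2/2) by norm_num, Real.exp_nat_mul]
    rfl
  rw [hexp] at h
  refine h.congr_deriv ?_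
  unfold cc
  rw [sqrt_two_pi]
  field_simp

lemma f_eq (x : ℝ) : f x = (3/2) * cc * pp x * (1 - EE x^2) := by
  unfold f cc pp EE
  ring

lemma H_hasDerivAt (x : ℝ) : HasDerivAt H (x^4 * f x) x := by
  have hcsq : cc^2 * (2*π) = 1 := by
    unfold cc
    rw [← Real.sqrt_inv, Real.sq_sqrt (by positivity)]
    field_simp
  have h3 : Real.sqrt 3 ^ 2 = 3 := Real.sq_sqrt (by norm_num)
  have hp := pp_hasDerivAt x
  have hE := EE_hasDerivAt x
  have hE3 := EE3_hasDerivAt x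
  have hV1 : HasDerivAt (fun x => -(x^3+3*x)*cc*pp x + (3/2)*EE x)
      ((-(3*x^2+3)*cc*pp x + -(x^3+3*x)*cc*(-x*pp x)) + (3/2)*(2*cc*pp x)) x := by
    have ha : HasDerivAt (fun x : ℝ => -(x^3+3*x)*cc) (-(3*x^2+3)*cc) x := by
      have : HasDerivAt (fun x : ℝ => x^3+3*x) (3*x^2+3) x := by
        exact ((hasDerivAt_pow 3 x).add ((hasDerivAt_id x).const_mul 3)).congr_deriv (by simp)
      simpa using (this.neg.mul_const cc)
    exact (ha.mul hp).add (hE.const_mul (3/2))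
  have hT1 : HasDerivAt (fun x => (1 - EE x^2) * (-(x^3+3*x)*cc*pp x + (3/2)*EE x))
      ((-(2*EE x*(2*cc*pp x))) * (-(x^3+3*x)*cc*pp x + (3/2)*EE x)
        + (1 - EE x^2) * ((-(3*x^2+3)*cc*pp x + -(x^3+3*x)*cc*(-x*pp x)) + (3/2)*(2*cc*pp x))) x := by
    have hsq : HasDerivAt (fun x => 1 - EE x^2) (-(2*EE x*(2*cc*pp x))) x := by
      have := (hE.pow 2).const_sub 1
      exact this.congr_deriv (by ring)
    exact hsq.mul hV1
  have hT2 : HasDerivAt (fun x => EE x^3) (3 * EE x^2 * (2*cc*pp x)) x := by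
    have := hE.pow 3
    exact this.congr_deriv (by ring)
  have hT3 : HasDerivAt (fun x => 4*EE x*(-(x^2/2+2)*cc^2*pp x^2))
      ((4*(2*cc*pp x))*(-(x^2/2+2)*cc^2*pp x^2)
        + (4*EE x)*((-x*cc^2)*pp x^2 + -(x^2/2+2)*cc^2*(2*pp x*(-x*pp x)))) x := by
    have ha : HasDerivAt (fun x : ℝ => 4*EE x) (4*(2*cc*pp x)) x := by
      simpa [mul_comm] using hE.const_mul 4
    have hb : HasDerivAt (fun x : ℝ => -(x^2/2+2)*cc^2) (-x*cc^2) x := by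
      have h1 : HasDerivAt (fun y : ℝ => y^2) (2*x) x := by
        simpa using hasDerivAt_pow 2 x
      have h2 := (((h1.div_const 2).add_const 2).neg).mul_const (cc^2)
      exact h2.congr_deriv (by ring)
    have hc : HasDerivAt (fun x : ℝ => pp x^2) (2*pp x*(-x*pp x)) x := by
      have := hp.pow 2
      exact this.congr_deriv (by ring)
    exact ha.mul (hb.mul hc)
  have hT4 : HasDerivAt (fun x => 4*(-(x/3)*cc^3*pp x^3 + 13*Real.sqrt 3/(36*π) * EE3 x))
      (4*(((-(1/3)*cc^3)*pp x^3 + (-(x/3)*cc^3)*(3*pp x^2*(-x*pp x)))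
        + 13*Real.sqrt 3/(36*π) * (2*Real.sqrt 3*cc*pp x^3))) x := by
    have ha : HasDerivAt (fun x : ℝ => -(x/3)*cc^3) (-(1/3)*cc^3) x := by
      have h1 : HasDerivAt (fun y : ℝ => -(y/3)) (-(1/3) : ℝ) x := by
        have := ((hasDerivAt_id x).div_const 3).neg
        exact this.congr_deriv (by norm_num)
      have := h1.mul_const (cc^3)
      exact this.congr_deriv (by ring)
    have hb : HasDerivAt (fun x : ℝ => pp x^3) (3*pp x^2*(-x*pp x)) x := by
      have := hp.pow 3
      exact this.congr_deriv (by ring)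
    exact ((ha.mul hb).add (hE3.const_mul (13*Real.sqrt 3/(36*π)))).const_mul 4
  have hH := (((hT1.add hT2).sub hT3).sub hT4).const_mul (3/2)
  have : H = fun x => (3/2) * ((1 - EE x^2) * (-(x^3+3*x)*cc*pp x + (3/2)*EE x) + EE x^3
    - 4*EE x*(-(x^2/2+2)*cc^2*pp x^2)
    - 4*(-(x/3)*cc^3*pp x^3 + 13*Real.sqrt 3/(36*π) * EE3 x)) := rfl
  rw [this]
  refine hH.congr_deriv ?_
  rw [f_eq]
  set P := pp x
  set e := EE x
  set s := Real.sqrt 3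
  have hπinv : π * π⁻¹ = 1 := mul_inv_cancel₀ Real.pi_ne_zero
  linear_combination (13*cc*P^3/π) * hcsq + (-13/3*cc*P^3/π) * h3 + (-26*cc^3*P^3) * hπinv

-- limits of x^n * pp x^k
lemma tendsto_pow_mul_pp_pow_top (n k : ℕ) (hk : 0 < k) :
    Filter.Tendsto (fun x : ℝ => x^n * pp x^k) atTop (𝓝 0) := by
  have hb : (0:ℝ) < k/2 := by positivity
  have hhalf : Filter.Tendsto (fun x : ℝ => Real.exp (-(1/2) * x)) atTop (𝓝 0) := by
    have h2 := Real.tendsto_exp_neg_atTop_nhds_zero.comp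
      (tendsto_id.atTop_div_const (by norm_num : (0:ℝ) < 2))
    apply h2.congr
    intro x
    simp only [Function.comp_apply, id_eq]
    congr 1
    ring
  have h := (rpow_mul_exp_neg_mul_sq_isLittleO_exp_neg hb (n:ℝ)).isBigO.trans_tendsto hhalf
  apply h.congr'
  filter_upwards [eventually_gt_atTop (0:ℝ)] with x hx
  rw [Real.rpow_natCast]
  congr 1
  unfold pp
  rw [← Real.exp_nat_mul]
  congr 1
  push_cast
  ring

lemma pp_neg (x : ℝ) : pp (-x) = pp x := by unfold pp; rw [neg_sq]

lemma tendsto_pow_mul_pp_pow_bot (n k : ℕ) (hk : 0 < k) :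
    Filter.Tendsto (fun x : ℝ => x^n * pp x^k) atBot (𝓝 0) := by
  have h := ((tendsto_pow_mul_pp_pow_top n k hk).comp tendsto_neg_atBot_atTop).const_mul ((-1:ℝ)^n)
  rw [mul_zero] at h
  apply h.congr
  intro x
  simp only [Function.comp_apply, pp_neg]
  rw [← mul_assoc, ← mul_pow]
  ring_nf

lemma erf_cont : Continuous erf := by
  rw [continuous_iff_continuousAt]
  exact fun x => (erf_hasDerivAt x).continuousAt

lemma tendsto_erf_atTop : Filter.Tendsto erf atTop (𝓝 1) := by
  have h : Filter.Tendsto (fun x : ℝ => ∫ s in (0:ℝ)..x, Real.exp (-s^2)) atTop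
      (𝓝 (∫ s in Set.Ioi 0, Real.exp (-s^2))) :=
    intervalIntegral_tendsto_integral_Ioi 0 gauss_intble.integrableOn tendsto_id
  have h2 : (∫ s in Set.Ioi (0:ℝ), Real.exp (-s^2)) = Real.sqrt π / 2 := by
    simpa using integral_gaussian_Ioi 1
  have hπ : (0:ℝ) < Real.sqrt π := Real.sqrt_pos.2 Real.pi_pos
  have := h.const_mul (2 / Real.sqrt π)
  rw [h2] at this
  have h3 : 2 / Real.sqrt π * (Real.sqrt π / 2) = 1 := by field_simp
  rw [h3] at this
  exact this

lemma erf_neg (x : ℝ) : erf (-x) = - erf x := by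
  have : (∫ s in (0:ℝ)..(-x), Real.exp (-s^2)) = - ∫ s in (0:ℝ)..x, Real.exp (-s^2) := by
    have h := intervalIntegral.integral_comp_neg (a := 0) (b := x) (fun s => Real.exp (-s^2))
    simp only [neg_zero] at h
    rw [intervalIntegral.integral_symm] at h
    simp only [neg_sq] at h ⊢
    rw [intervalIntegral.integral_symm] at h ⊢
    linarith [h]
  simp [erf, this]

lemma tendsto_erf_atBot : Filter.Tendsto erf atBot (𝓝 (-1)) := by
  have := (tendsto_erf_atTop.comp tendsto_neg_atBot_atTop).neg
  simp only [Function.comp] at this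
  simpa [erf_neg] using this

lemma EE_top : Filter.Tendsto EE atTop (𝓝 1) :=
  tendsto_erf_atTop.comp (tendsto_id.atTop_div_const (Real.sqrt_pos.2 (by norm_num)))

lemma EE_bot : Filter.Tendsto EE atBot (𝓝 (-1)) :=
  tendsto_erf_atBot.comp (by
    apply Filter.Tendsto.atBot_div_const (Real.sqrt_pos.2 (by norm_num)) tendsto_id)

lemma EE3_top : Filter.Tendsto EE3 atTop (𝓝 1) :=
  tendsto_erf_atTop.comp (Filter.Tendsto.atTop_mul_const
    (div_pos (Real.sqrt_pos.2 (by norm_num)) (Real.sqrt_pos.2 (by norm_num))) tendsto_id)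

lemma EE3_bot : Filter.Tendsto EE3 atBot (𝓝 (-1)) :=
  tendsto_erf_atBot.comp (Filter.Tendsto.atBot_mul_const
    (div_pos (Real.sqrt_pos.2 (by norm_num)) (Real.sqrt_pos.2 (by norm_num))) tendsto_id)

lemma H_top : Filter.Tendsto H atTop (𝓝 (3/2 - 13*Real.sqrt 3/(6*π))) := by
  have hA : Filter.Tendsto (fun x : ℝ => -(x^3+3*x)*cc*pp x) atTop (𝓝 0) := by
    have h := ((tendsto_pow_mul_pp_pow_top 3 1 one_pos).const_mul (-cc)).add
      ((tendsto_pow_mul_pp_pow_top 1 1 one_pos).const_mul (-3*cc))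
    simp only [mul_zero, add_zero] at h
    apply h.congr; intro x; ring
  have hV1 : Filter.Tendsto (fun x : ℝ => -(x^3+3*x)*cc*pp x + (3/2)*EE x) atTop (𝓝 (3/2)) := by
    have := hA.add (EE_top.const_mul (3/2))
    simpa using this
  have h1 : Filter.Tendsto (fun x : ℝ => 1 - EE x^2) atTop (𝓝 0) := by
    have := (EE_top.pow 2).const_sub 1
    simpa using this
  have hT1 := h1.mul hV1
  rw [zero_mul] at hT1
  have hT2 := EE_top.pow 3
  have hv2 : Filter.Tendsto (fun x : ℝ => -(x^2/2+2)*cc^2*pp x^2) atTop (𝓝 0) := by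
    have h := ((tendsto_pow_mul_pp_pow_top 2 2 two_pos).const_mul (-cc^2/2)).add
      ((tendsto_pow_mul_pp_pow_top 0 2 two_pos).const_mul (-2*cc^2))
    simp only [mul_zero, add_zero] at h
    apply h.congr; intro x; ring
  have hT3 := (EE_top.const_mul 4).mul hv2
  rw [mul_zero] at hT3
  have hW : Filter.Tendsto (fun x : ℝ => -(x/3)*cc^3*pp x^3 + 13*Real.sqrt 3/(36*π) * EE3 x)
      atTop (𝓝 (13*Real.sqrt 3/(36*π))) := by
    have ha : Filter.Tendsto (fun x : ℝ => -(x/3)*cc^3*pp x^3) atTop (𝓝 0) := by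
      have h := (tendsto_pow_mul_pp_pow_top 1 3 three_pos).const_mul (-cc^3/3)
      simp only [mul_zero] at h
      apply h.congr; intro x; ring
    have := ha.add (EE3_top.const_mul (13*Real.sqrt 3/(36*π)))
    simpa using this
  have hall := (((hT1.add hT2).sub hT3).sub (hW.const_mul 4)).const_mul (3/2)
  have heq : Filter.Tendsto H atTop
      (𝓝 ((3/2) * ((0 + 1^3 - 0) - 4*(13*Real.sqrt 3/(36*π))))) := by
    apply hall.congr
    intro x
    show _ = H x
    unfold H
    ring
  convert heq using 2
  ring

lemma H_bot : Filter.Tendsto H atBot (𝓝 (-(3/2) + 13*Real.sqrt 3/(6*π))) := by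
  have hA : Filter.Tendsto (fun x : ℝ => -(x^3+3*x)*cc*pp x) atBot (𝓝 0) := by
    have h := ((tendsto_pow_mul_pp_pow_bot 3 1 one_pos).const_mul (-cc)).add
      ((tendsto_pow_mul_pp_pow_bot 1 1 one_pos).const_mul (-3*cc))
    simp only [mul_zero, add_zero] at h
    apply h.congr; intro x; ring
  have hV1 : Filter.Tendsto (fun x : ℝ => -(x^3+3*x)*cc*pp x + (3/2)*EE x) atBot (𝓝 (-(3/2))) := by
    have := hA.add (EE_bot.const_mul (3/2))
    have h2 : (0:ℝ) + 3/2 * (-1) = -(3/2) := by norm_num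
    rwa [h2] at this
  have h1 : Filter.Tendsto (fun x : ℝ => 1 - EE x^2) atBot (𝓝 0) := by
    have := (EE_bot.pow 2).const_sub 1
    simpa using this
  have hT1 := h1.mul hV1
  rw [zero_mul] at hT1
  have hT2 := EE_bot.pow 3
  have hv2 : Filter.Tendsto (fun x : ℝ => -(x^2/2+2)*cc^2*pp x^2) atBot (𝓝 0) := by
    have h := ((tendsto_pow_mul_pp_pow_bot 2 2 two_pos).const_mul (-cc^2/2)).add
      ((tendsto_pow_mul_pp_pow_bot 0 2 two_pos).const_mul (-2*cc^2))
    simp only [mul_zero, add_zero] at h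
    apply h.congr; intro x; ring
  have hT3 := (EE_bot.const_mul 4).mul hv2
  rw [mul_zero] at hT3
  have hW : Filter.Tendsto (fun x : ℝ => -(x/3)*cc^3*pp x^3 + 13*Real.sqrt 3/(36*π) * EE3 x)
      atBot (𝓝 (-(13*Real.sqrt 3/(36*π)))) := by
    have ha : Filter.Tendsto (fun x : ℝ => -(x/3)*cc^3*pp x^3) atBot (𝓝 0) := by
      have h := (tendsto_pow_mul_pp_pow_bot 1 3 three_pos).const_mul (-cc^3/3)
      simp only [mul_zero] at h
      apply h.congr; intro x; ring
    have := ha.add (EE3_bot.const_mul (13*Real.sqrt 3/(36*π)))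
    have h2 : (0:ℝ) + 13*Real.sqrt 3/(36*π) * (-1) = -(13*Real.sqrt 3/(36*π)) := by ring
    rwa [h2] at this
  have hall := (((hT1.add hT2).sub hT3).sub (hW.const_mul 4)).const_mul (3/2)
  have heq : Filter.Tendsto H atBot
      (𝓝 ((3/2) * ((0 + (-1)^3 - 0) - 4*(-(13*Real.sqrt 3/(36*π)))))) := by
    apply hall.congr
    intro x
    show _ = H x
    unfold H
    ring
  convert heq using 2
  ring

lemma erf_le_one {x : ℝ} : erf x ≤ 1 := by
  rcases le_or_gt x 0 with hx | hx
  · have h1 : (∫ s in (0:ℝ)..x, Real.exp (-s^2)) ≤ 0 := by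
      rw [intervalIntegral.integral_symm]
      have : 0 ≤ ∫ s in x..(0:ℝ), Real.exp (-s^2) :=
        intervalIntegral.integral_nonneg hx (fun u _ => (Real.exp_pos _).le)
      linarith
    have h2 : (0:ℝ) ≤ 2 / Real.sqrt π := by positivity
    have := mul_nonpos_of_nonneg_of_nonpos h2 h1
    unfold erf; linarith
  · have h1 : (∫ s in (0:ℝ)..x, Real.exp (-s^2)) ≤ Real.sqrt π / 2 := by
      rw [intervalIntegral.integral_of_le hx.le]
      have : (∫ s in Set.Ioc 0 x, Real.exp (-s^2)) ≤ ∫ s in Set.Ioi 0, Real.exp (-s^2) := by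
        apply setIntegral_mono_set gauss_intble.integrableOn
        · exact Filter.Eventually.of_forall (fun u => (Real.exp_pos _).le)
        · exact HasSubset.Subset.eventuallyLE Set.Ioc_subset_Ioi_self
      calc (∫ s in Set.Ioc 0 x, Real.exp (-s^2)) ≤ ∫ s in Set.Ioi 0, Real.exp (-s^2) := this
        _ = Real.sqrt π / 2 := by simpa using integral_gaussian_Ioi 1
    have hπ : (0:ℝ) < Real.sqrt π := Real.sqrt_pos.2 Real.pi_pos
    have : 2 / Real.sqrt π * (∫ s in (0:ℝ)..x, Real.exp (-s^2)) ≤ 2 / Real.sqrt π * (Real.sqrt π / 2) :=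
      mul_le_mul_of_nonneg_left h1 (by positivity)
    have h2 : 2 / Real.sqrt π * (Real.sqrt π / 2) = 1 := by field_simp
    unfold erf; linarith [this, h2]

lemma neg_one_le_erf {x : ℝ} : -1 ≤ erf x := by
  have := erf_le_one (x := -x)
  rw [erf_neg] at this; linarith

lemma f_intble : Integrable (fun x : ℝ => x^4 * f x) := by
  have hg0 : Integrable (fun x : ℝ => x^4 * Real.exp (-(1/2:ℝ)*x^2)) := by
    have h := integrable_rpow_mul_exp_neg_mul_sq (b := (1/2:ℝ)) (by norm_num) (s := (4:ℝ))
      (by norm_num)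
    apply h.congr
    apply Filter.Eventually.of_forall
    intro x
    show x ^ ((4:ℝ)) * Real.exp (-(1/2:ℝ)*x^2) = x ^ (4:ℕ) * Real.exp (-(1/2:ℝ)*x^2)
    rw [show (4:ℝ) = ((4:ℕ):ℝ) by norm_num, Real.rpow_natCast]
  have hcc : (0:ℝ) < cc := by
    unfold cc
    positivity
  have hcontf : Continuous f := by
    unfold f
    apply Continuous.mul
    · apply Continuous.mul continuous_const
      exact (Continuous.div_const (continuous_pow 2).neg 2).rexp
    · apply Continuous.sub continuous_const
      exact ((erf_cont.comp (continuous_id.div_const _)).pow 2)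
  apply Integrable.mono' (hg0.const_mul ((3/2)*cc))
  · exact ((continuous_pow 4).mul hcontf).aestronglyMeasurable
  · apply Filter.Eventually.of_forall
    intro x
    rw [f_eq]
    have hpp : (0:ℝ) < pp x := Real.exp_pos _
    have hE2 : EE x^2 ≤ 1 := by
      unfold EE
      nlinarith [erf_le_one (x := x / Real.sqrt 2), neg_one_le_erf (x := x / Real.sqrt 2),
        sq_nonneg (EE x)]
    have hE0 : (0:ℝ) ≤ 1 - EE x^2 := by nlinarith [hE2]
    have hx4 : (0:ℝ) ≤ x^4 := by positivity
    have hppe : Real.exp (-(1/2:ℝ)*x^2) = pp x := by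
      unfold pp; congr 1; ring
    have habs : (0:ℝ) ≤ x ^ 4 * (3 / 2 * cc * pp x * (1 - EE x ^ 2)) := by
      apply mul_nonneg hx4
      apply mul_nonneg _ hE0
      nlinarith [mul_pos hcc hpp]
    rw [hppe, Real.norm_eq_abs, abs_of_nonneg habs]
    have h1 : (0:ℝ) ≤ 3/2*cc*pp x := by nlinarith [mul_pos hcc hpp]
    have h2 : 3/2*cc*pp x*(1-EE x^2) ≤ 3/2*cc*pp x := by nlinarith [h1, hE0, hE2]
    have h3 := mul_le_mul_of_nonneg_left h2 hx4
    nlinarith [h3]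

lemma integral_x4f : (∫ x : ℝ, x^4 * f x) = 3 - 13*Real.sqrt 3/(3*π) := by
  rw [MeasureTheory.integral_of_hasDerivAt_of_tendsto H_hasDerivAt f_intble H_bot H_top]
  ring

lemma part2 : (∫ x : ℝ, x^4 * f x) ≠ 3*(1 - Real.sqrt 3/π)^2 := by
  rw [integral_x4f]
  intro heq
  have h3 : Real.sqrt 3^2 = 3 := Real.sq_sqrt (by norm_num)
  have h3lt : (1.73:ℝ) < Real.sqrt 3 := by
    rw [show (1.73:ℝ) = Real.sqrt (1.73^2) from (Real.sqrt_sq (by norm_num)).symm]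
    exact Real.sqrt_lt_sqrt (by norm_num) (by norm_num)
  have hπ : (3.14:ℝ) < π := by linarith [Real.pi_gt_d6]
  have hπpos := Real.pi_pos
  field_simp at heq
  nlinarith [heq, h3, h3lt, hπ, mul_pos (sub_pos.2 h3lt) (sub_pos.2 hπ)]

lemma erf_zero : erf 0 = 0 := by simp [erf]

lemma erf_ge {t : ℝ} (ht : 0 ≤ t) : 2 / Real.sqrt π * (t * Real.exp (-t^2)) ≤ erf t := by
  have h : (∫ _s in (0:ℝ)..t, Real.exp (-t^2)) ≤ ∫ s in (0:ℝ)..t, Real.exp (-s^2) := by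
    apply intervalIntegral.integral_mono_on ht intervalIntegrable_const
      gauss_intble.intervalIntegrable
    intro u hu
    apply Real.exp_le_exp.2
    nlinarith [hu.1, hu.2]
  rw [intervalIntegral.integral_const, smul_eq_mul] at h
  simp only [sub_zero] at h
  have h2 : (0:ℝ) ≤ 2 / Real.sqrt π := by positivity
  have := mul_le_mul_of_nonneg_left h h2
  unfold erf
  linarith


lemma part1 (σ : ℝ) (hσ : 0 < σ)
    (h : f = fun x => (1 / (σ * Real.sqrt (2*π))) * Real.exp (-x^2 / (2*σ^2))) : False := by
  have hE : (0:ℝ) < Real.sqrt (2*π) := Real.sqrt_pos.2 (by positivity)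
  have h2 : Real.sqrt 2 ^ 2 = 2 := Real.sq_sqrt (by norm_num)
  have h2p : (0:ℝ) < Real.sqrt 2 := Real.sqrt_pos.2 (by norm_num)
  have hπs : Real.sqrt π ^ 2 = π := Real.sq_sqrt Real.pi_pos.le
  have hπsp : (0:ℝ) < Real.sqrt π := Real.sqrt_pos.2 Real.pi_pos
  -- evaluate at 0
  have h0 := congrFun h 0
  simp only [f] at h0
  rw [show (0:ℝ)/Real.sqrt 2 = 0 by norm_num, erf_zero] at h0
  norm_num at h0
  have hσv : σ = 2/3 := by
    field_simp at h0
    have h' : (3*σ - 2) * (Real.sqrt π * Real.sqrt 2) = 0 := by linear_combination (Real.sqrt π * Real.sqrt 2) * h0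
    rcases mul_eq_zero.1 h' with h'' | h''
    · linarith
    · nlinarith [mul_pos hπsp h2p]
  subst hσv
  -- evaluate at 1/10
  have h1 := congrFun h (1/10)
  simp only [f] at h1
  set t : ℝ := (1/10) / Real.sqrt 2 with ht
  have htsq : t^2 = 1/200 := by
    rw [ht, div_pow, h2]; norm_num
  have htpos : 0 < t := by positivity
  have harg1 : -(1/10:ℝ)^2/2 = -1/200 := by norm_num
  have harg2 : -(1/10:ℝ)^2/(2*(2/3)^2) = -9/800 := by norm_num
  rw [harg1, harg2] at h1
  have hkey : 1 - erf t ^ 2 = Real.exp (-1/160) := by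
    have hb : Real.exp (-9/800 : ℝ) = Real.exp (-1/200) * Real.exp (-1/160) := by
      rw [← Real.exp_add]; norm_num
    have hexp : (0:ℝ) < Real.exp (-1/200) := Real.exp_pos _
    rw [hb] at h1
    have hc : (1:ℝ) / (2/3 * Real.sqrt (2*π)) = 3 / (2 * Real.sqrt (2*π)) := by
      rw [div_eq_div_iff (by positivity) (by positivity)]; ring
    rw [hc] at h1
    have hA : (3 / (2 * Real.sqrt (2*π)) * Real.exp (-1/200:ℝ)) ≠ 0 := by positivity
    rw [← mul_assoc] at h1
    exact mul_left_cancel₀ hA h1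
  -- upper bound on erf t ^ 2
  have hup : erf t ^ 2 ≤ 1/160 := by
    have := Real.add_one_le_exp (-1/160 : ℝ)
    nlinarith [hkey]
  -- lower bound on erf t ^ 2
  have hlo : 99 / (5000 * π) ≤ erf t ^ 2 := by
    have hge := erf_ge htpos.le
    rw [htsq] at hge
    have hgepos : (0:ℝ) ≤ 2 / Real.sqrt π * (t * Real.exp (-(1/200):ℝ)) := by positivity
    have hge' : 2 / Real.sqrt π * (t * Real.exp (-(1/200):ℝ)) ≤ erf t := by
      convert hge using 3
    have hsq : (2 / Real.sqrt π * (t * Real.exp (-(1/200):ℝ)))^2 ≤ erf t ^ 2 := by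
      nlinarith [hge', hgepos]
    have hee : Real.exp (-(1/200):ℝ) ^ 2 = Real.exp (-1/100) := by
      rw [← Real.exp_nat_mul]
      norm_num
    have hexplo : (99/100 : ℝ) ≤ Real.exp (-1/100) := by
      have := Real.add_one_le_exp (-1/100 : ℝ); linarith
    have hval : (2 / Real.sqrt π * (t * Real.exp (-(1/200):ℝ)))^2
        = 4 / π * (1/200) * Real.exp (-(1/200):ℝ)^2 := by
      rw [mul_pow, mul_pow, div_pow, hπs, htsq]
      ring
    rw [hval, hee] at hsq
    have hπpos := Real.pi_pos
    calc 99 / (5000 * π) = 4 / π * (1/200) * (99/100) := by field_simp; ring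
      _ ≤ 4 / π * (1/200) * Real.exp (-1/100) := by
          apply mul_le_mul_of_nonneg_left hexplo; positivity
      _ ≤ erf t ^ 2 := hsq
  have hπ315 : π < 3.15 := Real.pi_lt_d2
  have hπpos := Real.pi_pos
  rw [div_le_iff₀ (by positivity)] at hlo
  nlinarith [hlo, hup, hπ315]


theorem median_not_normal :
    (∀ σ : ℝ, 0 < σ →
      f ≠ fun x => (1 / (σ * Real.sqrt (2*π))) * Real.exp (-x^2 / (2*σ^2)))
    ∧ (∫ x : ℝ, x^4 * f x) ≠ 3 * (1 - Real.sqrt 3 / π)^2 := by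
  exact ⟨fun σ hσ h => part1 σ hσ h, part2⟩
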